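/- Let Φ̄(x) = P(Z > x) for Z a standard normal random variable. Then for all x > 0: Φ̄(x) ≥ (1/2)·exp(1/π)·exp( −(x + √(2/π))²/2 ). -/

import Mathlib

open Real MeasureTheory Set Filter Topology

/-- The complementary cumulative distribution function of the standard normal
distribution: `Φ̄(x) = ∫_x^∞ (2π)^{-1/2} e^{-u²/2} du`. -/
noncomputable def PhiBar (x : ℝ) : ℝ :=
  ∫ u in Set.Ioi x, Real.exp (-u ^ 2 / 2) / Real.sqrt (2 * Real.pi)

namespace Stmt10Aux

noncomputable def a : ℝ := Real.sqrt (2 / Real.pi)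

lemma ha : 0 < a := Real.sqrt_pos.2 (by positivity)

lemma ha2 : a ^ 2 = 2 / Real.pi := Real.sq_sqrt (by positivity)

lemma hsqrt : Real.sqrt (2 * Real.pi) = 2 / a := by
  rw [eq_div_iff ha.ne', a, ← Real.sqrt_mul (by positivity),
    show 2 * Real.pi * (2 / Real.pi) = 2 ^ 2 by field_simp,
    Real.sqrt_sq (by norm_num)]

noncomputable def R (u : ℝ) : ℝ := Real.exp (-(a * u + u ^ 2 / 2)) / 2

lemma R_eq (u : ℝ) :
    1 / 2 * Real.exp (1 / Real.pi) * Real.exp (-(u + a) ^ 2 / 2) = R u := by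
  rw [R, mul_assoc, ← Real.exp_add]
  rw [show 1 / Real.pi + -(u + a) ^ 2 / 2 = -(a * u + u ^ 2 / 2) by
    linear_combination (-1 / 2 : ℝ) * ha2]
  ring

lemma hasDerivAt_negR (u : ℝ) :
    HasDerivAt (fun v : ℝ => -R v) ((u + a) * R u) u := by
  have h1 : HasDerivAt (fun v : ℝ => -(a * v + v ^ 2 / 2)) (-(a + u)) u := by
    have := (((hasDerivAt_id u).const_mul a).add ((hasDerivAt_pow 2 u).div_const 2)).neg
    refine this.congr_deriv ?_
    simp
  have h2 := ((h1.exp).div_const 2).neg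
  refine h2.congr_deriv ?_
  simp only [R]; ring

lemma tendsto_negR : Tendsto (fun v : ℝ => -R v) atTop (𝓝 0) := by
  have h1 : Tendsto (fun v : ℝ => a * v) atTop atTop :=
    Tendsto.const_mul_atTop ha tendsto_id
  have h2 : Tendsto (fun v : ℝ => v ^ 2 / 2) atTop atTop :=
    (tendsto_pow_atTop two_ne_zero).atTop_div_const (by norm_num)
  have h : Tendsto (fun v : ℝ => -(a * v + v ^ 2 / 2)) atTop atBot :=
    Filter.tendsto_neg_atBot_iff.mpr (Filter.Tendsto.atTop_add_atTop h1 h2)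
  have hR : Tendsto R atTop (𝓝 0) := by
    have h' := (Real.tendsto_exp_atBot.comp h).div_const 2
    have hrw : R = fun v => (Real.exp ∘ fun v : ℝ => -(a * v + v ^ 2 / 2)) v / 2 := rfl
    rw [hrw]
    simpa using h'
  simpa using hR.neg

lemma exp_conv {p q s t : ℝ} (hp : 0 ≤ p) (hq : 0 ≤ q) (hpq : p + q = 1) :
    Real.exp (p * s + q * t) ≤ p * Real.exp s + q * Real.exp t := by
  have := convexOn_exp.2 (Set.mem_univ s) (Set.mem_univ t) hp hq hpq
  simpa using this

lemma caseA {x u : ℝ} (hx : 0 < x) (hGx : a * Real.exp (a * x) ≤ x + a)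
    (hu : 0 ≤ u) (hux : u ≤ x) : a * Real.exp (a * u) ≤ u + a := by
  have ht0 : 0 ≤ u / x := by positivity
  have ht1 : u / x ≤ 1 := by rw [div_le_one hx]; exact hux
  have hc := exp_conv (p := 1 - u / x) (q := u / x) (s := 0) (t := a * x)
    (by linarith) ht0 (by ring)
  rw [show (1 - u / x) * 0 + u / x * (a * x) = a * u by field_simp; ring, Real.exp_zero,
    mul_one] at hc
  have htx : u / x * x = u := div_mul_cancel₀ u hx.ne'
  nlinarith [mul_le_mul_of_nonneg_left hc ha.le, mul_le_mul_of_nonneg_left hGx ht0,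
    Real.exp_pos (a * x)]

lemma caseB {x u : ℝ} (hx : 0 < x) (hGx : x + a ≤ a * Real.exp (a * x))
    (hux : x ≤ u) : u + a ≤ a * Real.exp (a * u) := by
  have hu : 0 < u := lt_of_lt_of_le hx hux
  have ht0 : 0 ≤ x / u := by positivity
  have ht0' : 0 < x / u := by positivity
  have ht1 : x / u ≤ 1 := by rw [div_le_one hu]; exact hux
  have hc := exp_conv (p := 1 - x / u) (q := x / u) (s := 0) (t := a * u)
    (by linarith) ht0 (by ring)
  rw [show (1 - x / u) * 0 + x / u * (a * u) = a * x by field_simp; ring, Real.exp_zero,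
    mul_one] at hc
  have htx : x / u * u = x := div_mul_cancel₀ x hu.ne'
  nlinarith [mul_le_mul_of_nonneg_left hc ha.le, Real.exp_pos (a * u)]

lemma pointA {u : ℝ} (h : a * Real.exp (a * u) ≤ u + a) :
    Real.exp (-u ^ 2 / 2) / Real.sqrt (2 * Real.pi) ≤ (u + a) * R u := by
  have h2 : a ≤ (u + a) * Real.exp (-(a * u)) := by
    have := mul_le_mul_of_nonneg_right h (Real.exp_pos (-(a * u))).le
    rwa [mul_assoc, ← Real.exp_add, add_neg_cancel, Real.exp_zero, mul_one] at this
  rw [hsqrt, div_div_eq_mul_div, R,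
    show -(a * u + u ^ 2 / 2) = -(a * u) + -u ^ 2 / 2 by ring, Real.exp_add]
  nlinarith [mul_le_mul_of_nonneg_right h2 (Real.exp_pos (-u ^ 2 / 2)).le]

lemma pointB {u : ℝ} (h : u + a ≤ a * Real.exp (a * u)) :
    (u + a) * R u ≤ Real.exp (-u ^ 2 / 2) / Real.sqrt (2 * Real.pi) := by
  have h2 : (u + a) * Real.exp (-(a * u)) ≤ a := by
    have := mul_le_mul_of_nonneg_right h (Real.exp_pos (-(a * u))).le
    rwa [mul_assoc, ← Real.exp_add, add_neg_cancel, Real.exp_zero, mul_one] at this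
  rw [hsqrt, div_div_eq_mul_div, R,
    show -(a * u + u ^ 2 / 2) = -(a * u) + -u ^ 2 / 2 by ring, Real.exp_add]
  nlinarith [mul_le_mul_of_nonneg_right h2 (Real.exp_pos (-u ^ 2 / 2)).le]

lemma integrable_phi :
    Integrable (fun u : ℝ => Real.exp (-u ^ 2 / 2) / Real.sqrt (2 * Real.pi)) := by
  have h : Integrable (fun u : ℝ => Real.exp (-(1 / 2) * u ^ 2) / Real.sqrt (2 * Real.pi)) :=
    (integrable_exp_neg_mul_sq one_half_pos).div_const _
  have heq : (fun u : ℝ => Real.exp (-u ^ 2 / 2) / Real.sqrt (2 * Real.pi)) =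
      fun u : ℝ => Real.exp (-(1 / 2) * u ^ 2) / Real.sqrt (2 * Real.pi) := by
    funext u; rw [show -u ^ 2 / 2 = -(1 / 2) * u ^ 2 by ring]
  rw [heq]; exact h

lemma PhiBar_zero : PhiBar 0 = 1 / 2 := by
  have hs : (0 : ℝ) < Real.sqrt (2 * Real.pi) := Real.sqrt_pos.2 (by positivity)
  rw [PhiBar]
  rw [MeasureTheory.integral_div]
  simp_rw [show ∀ u : ℝ, -u ^ 2 / 2 = -(1 / 2) * u ^ 2 from fun u => by ring]
  rw [integral_gaussian_Ioi, show Real.pi / (1 / 2) = 2 * Real.pi by ring]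
  field_simp

lemma contR : Continuous (fun u : ℝ => (u + a) * R u) := by
  simp only [R]; fun_prop

end Stmt10Aux

open Stmt10Aux in
/-- for all `x > 0`,
`Φ̄(x) ≥ (1/2)·exp(1/π)·exp(−(x + √(2/π))²/2)`. -/
theorem stmt10 (x : ℝ) (hx : 0 < x) :
    1 / 2 * Real.exp (1 / Real.pi) * Real.exp (-(x + Real.sqrt (2 / Real.pi)) ^ 2 / 2) ≤
      PhiBar x := by
  rw [show Real.sqrt (2 / Real.pi) = a from rfl, R_eq x]
  rcases le_total (a * Real.exp (a * x)) (x + a) with hG | hG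
  · -- Case A : compare on (0, x]
    have hmono : ∫ u in Ioc 0 x, Real.exp (-u ^ 2 / 2) / Real.sqrt (2 * Real.pi)
        ≤ ∫ u in Ioc 0 x, (u + a) * R u := by
      apply setIntegral_mono_on (integrable_phi.integrableOn) (contR.integrableOn_Ioc)
        measurableSet_Ioc
      intro u hu
      exact pointA (caseA hx hG hu.1.le hu.2)
    have hFTC : ∫ u in Ioc 0 x, (u + a) * R u = R 0 - R x := by
      rw [← intervalIntegral.integral_of_le hx.le]
      have := intervalIntegral.integral_eq_sub_of_hasDerivAt
        (f := fun v : ℝ => -R v) (f' := fun u => (u + a) * R u)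
        (fun u _ => hasDerivAt_negR u) (contR.intervalIntegrable 0 x)
      rw [this]; ring
    have hsplit : PhiBar 0 = (∫ u in Ioc 0 x,
        Real.exp (-u ^ 2 / 2) / Real.sqrt (2 * Real.pi)) + PhiBar x := by
      rw [PhiBar, PhiBar, ← Ioc_union_Ioi_eq_Ioi hx.le]
      exact setIntegral_union (Ioc_disjoint_Ioi le_rfl) measurableSet_Ioi
        integrable_phi.integrableOn integrable_phi.integrableOn
    have hR0 : R 0 = 1 / 2 := by simp [R]
    have h0 := PhiBar_zero
    linarith
  · -- Case B : compare on (x, ∞)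
    have hnn : ∀ u ∈ Ioi x, 0 ≤ (u + a) * R u := by
      intro u hu
      have hu0 : 0 < u := hx.trans hu
      have hR : 0 < R u := by rw [R]; positivity
      have haa := ha
      exact mul_nonneg (by linarith) hR.le
    have hkey : ∫ u in Ioi x, (u + a) * R u = R x := by
      have := integral_Ioi_of_hasDerivAt_of_nonneg' (g := fun v : ℝ => -R v)
        (g' := fun u => (u + a) * R u) (a := x) (l := 0)
        (fun u _ => hasDerivAt_negR u) hnn tendsto_negR
      rw [this]; ring
    have hint : IntegrableOn (fun u : ℝ => (u + a) * R u) (Ioi x) :=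
      integrableOn_Ioi_deriv_of_nonneg' (fun u _ => hasDerivAt_negR u) hnn tendsto_negR
    have hmono : ∫ u in Ioi x, (u + a) * R u
        ≤ ∫ u in Ioi x, Real.exp (-u ^ 2 / 2) / Real.sqrt (2 * Real.pi) := by
      apply setIntegral_mono_on hint integrable_phi.integrableOn measurableSet_Ioi
      intro u hu
      exact pointB (caseB hx hG hu.le)
    rw [PhiBar]
    linarith
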